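/- In the frame-asynchronous model with parameters 0 < λ < 1, 0 < ε < 1, n ≥ 1 and λn < 1−ε, the PGF of the steady-state peak age of information P is G_P(s) = ((1−ε)s^n / (1 − ε s^n)) · (G_{D'}(s) − (1−s)·G_{D'}((1−λ)s)/(1 − (1−λ)s)), where G_{D'} is the frame-asynchronous steady-state delay PGF (s−1)(1−ε−λn)s^n/(s − (1−λ) − (λ+ε(s−1))s^n). -/

import Mathlib

open MeasureTheory ProbabilityTheory

/-- The frame-asynchronous steady-state delay PGF (Theorem 3). -/
noncomputable def GDasync (lam ε : ℝ) (n : ℕ) (s : ℝ) : ℝ :=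
  (s - 1) * (1 - ε - lam * n) * s ^ n / (s - (1 - lam) - (lam + ε * (s - 1)) * s ^ n)



lemma integrable_bdd {Ω : Type*} [MeasurableSpace Ω] (μ : Measure Ω) [IsFiniteMeasure μ]
    (f : Ω → ℝ) (hf : Measurable f) (hb : ∀ ω, |f ω| ≤ 1) : Integrable f μ :=
  (integrable_const (1:ℝ)).mono' hf.aestronglyMeasurable (ae_of_all _ (by simpa using hb))

lemma integral_comp_nat {Ω : Type*} [MeasurableSpace Ω] (μ : Measure Ω) [IsProbabilityMeasure μ]
    (X : Ω → ℕ) (hX : Measurable X) (f : ℕ → ℝ) (hb : ∀ j, |f j| ≤ 1) :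
    ∫ ω, f (X ω) ∂μ = ∑' j, (μ {ω | X ω = j}).toReal * f j := by
  have hfm : Measurable f := .of_discrete
  have : IsProbabilityMeasure (μ.map X) := Measure.isProbabilityMeasure_map hX.aemeasurable
  rw [← integral_map hX.aemeasurable hfm.aestronglyMeasurable,
    integral_countable' (integrable_bdd _ f hfm hb)]
  congr 1 with j
  rw [measureReal_def, Measure.map_apply hX (measurableSet_singleton j)]
  simp [Set.preimage, smul_eq_mul]

lemma T_zero {Ω : Type*} [MeasurableSpace Ω] (μ : Measure Ω) [IsProbabilityMeasure μ]
    (lam : ℝ) (hlam0 : 0 < lam) (hlam1 : lam < 1)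
    (T : Ω → ℕ) (hT : Measurable T)
    (hTgeo : ∀ k : ℕ, 1 ≤ k →
      μ {ω | T ω = k} = ENNReal.ofReal ((1 - lam) ^ (k - 1) * lam)) :
    μ {ω | T ω = 0} = 0 := by
  have hq0 : (0:ℝ) ≤ 1 - lam := by linarith
  have hq1 : 1 - lam < 1 := by linarith
  have hdisj : Pairwise (Function.onFun Disjoint fun t => {ω | T ω = t}) := by
    intro a b hab
    simp only [Function.onFun, Set.disjoint_left]
    rintro ω (h1 : T ω = a) (h2 : T ω = b)
    exact hab (h1 ▸ h2 ▸ rfl)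
  have hmeas : ∀ t : ℕ, MeasurableSet {ω | T ω = t} := fun t =>
    hT (measurableSet_singleton t)
  have hunion : (⋃ t, {ω | T ω = t}) = Set.univ := by
    ext ω; simp
  have htot : ∑' t, μ {ω | T ω = t} = 1 := by
    rw [← measure_iUnion hdisj hmeas, hunion, measure_univ]
  have hsplit : ∑' t, μ {ω | T ω = t}
      = μ {ω | T ω = 0} + ∑' t, μ {ω | T ω = t + 1} :=
    tsum_eq_zero_add' (f := fun t => μ {ω | T ω = t}) ENNReal.summable
  have htail : ∑' t : ℕ, μ {ω | T ω = t + 1} = 1 := by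
    have h1 : ∀ t : ℕ, μ {ω | T ω = t + 1} = ENNReal.ofReal ((1 - lam) ^ t * lam) := by
      intro t; simpa using hTgeo (t + 1) (by omega)
    have hsum : Summable fun t : ℕ => (1 - lam) ^ t * lam :=
      (summable_geometric_of_lt_one hq0 hq1).mul_right _
    calc ∑' t : ℕ, μ {ω | T ω = t + 1}
        = ENNReal.ofReal (∑' t : ℕ, (1 - lam) ^ t * lam) := by
          rw [ENNReal.ofReal_tsum_of_nonneg (fun t => by positivity) hsum]
          exact tsum_congr h1
      _ = 1 := by
          rw [tsum_mul_right, tsum_geometric_of_lt_one hq0 hq1]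
          rw [show (1:ℝ) - (1 - lam) = lam by ring]
          rw [inv_mul_cancel₀ (ne_of_gt hlam0)]
          simp
  rw [htail] at hsplit
  rw [hsplit] at htot
  have hle : μ {ω | T ω = 0} ≤ 1 := prob_le_one
  have hne : (1:ENNReal) ≠ ⊤ := by simp
  have := ENNReal.eq_sub_of_add_eq hne htot
  simpa using this

lemma inner_geom (lam s : ℝ) (hl0 : 0 < lam) (hl1 : lam < 1) (hs0 : 0 < s) (hs1 : s < 1)
    (d : ℕ) (pT : ℕ → ℝ) (hp0 : pT 0 = 0) (hp : ∀ t, pT (t + 1) = (1 - lam) ^ t * lam) :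
    ∑' t, pT t * s ^ max d t
      = s ^ d - (1 - s) / (1 - (1 - lam) * s) * ((1 - lam) * s) ^ d := by
  set r : ℝ := (1 - lam) * s with hr
  have hq0 : (0:ℝ) ≤ 1 - lam := by linarith
  have hr0 : 0 ≤ r := by positivity
  have hr1 : r < 1 := by nlinarith
  have hrne : 1 - r ≠ 0 := by nlinarith
  set h : ℕ → ℝ := fun t => (1 - lam) ^ t * lam * s ^ max d (t + 1) with hh
  have hsum : Summable h := by
    apply Summable.of_nonneg_of_le (fun t => by positivity)
      (fun t => ?_) (summable_geometric_of_lt_one hq0 (by linarith))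
    have h1 : lam * s ^ max d (t+1) ≤ 1 := by
      have : s ^ max d (t+1) ≤ 1 := pow_le_one₀ hs0.le hs1.le
      nlinarith
    calc (1 - lam) ^ t * lam * s ^ max d (t + 1)
        = (1 - lam) ^ t * (lam * s ^ max d (t + 1)) := by ring
      _ ≤ (1 - lam) ^ t * 1 := by
          apply mul_le_mul_of_nonneg_left h1 (by positivity)
      _ = (1 - lam) ^ t := by ring
  have hsum' : Summable fun t => pT (t + 1) * s ^ max d (t + 1) := by
    apply hsum.congr; intro t; rw [hp t]
  have hstep : ∑' t, pT t * s ^ max d t = ∑' t, h t := by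
    rw [tsum_eq_zero_add' (f := fun t => pT t * s ^ max d t) hsum']
    simp only [hp0, zero_mul, zero_add]
    exact tsum_congr fun t => by rw [hp t]
  rw [hstep]
  -- split at d
  have hsplit := hsum.sum_add_tsum_nat_add d
  have hhead : ∑ i ∈ Finset.range d, h i = s ^ d * (1 - (1 - lam) ^ d) := by
    have : ∀ i ∈ Finset.range d, h i = lam * s ^ d * (1 - lam) ^ i := by
      intro i hi
      have hid : i + 1 ≤ d := Finset.mem_range.mp hi
      rw [hh]
      simp only
      rw [max_eq_left hid]
      ring
    have hlne : lam ≠ 0 := ne_of_gt hl0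
    rw [Finset.sum_congr rfl this, ← Finset.mul_sum, geom_sum_eq (by intro hc; nlinarith) d]
    field_simp
    linear_combination (1 - (1 - lam) ^ d) * mul_inv_cancel₀ hlne
  have htail : ∑' i, h (i + d) = lam * s * r ^ d / (1 - r) := by
    have he : ∀ i, h (i + d) = (lam * s * r ^ d) * r ^ i := by
      intro i
      rw [hh]
      simp only
      rw [max_eq_right (by omega : d ≤ i + d + 1)]
      rw [hr, mul_pow, mul_pow, pow_add, pow_add, pow_succ]
      ring
    rw [tsum_congr he, tsum_mul_left, tsum_geometric_of_lt_one hr0 hr1]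
    field_simp
  have hrd : (1 - lam) ^ d * s ^ d = r ^ d := by rw [hr, mul_pow]
  have := hsplit
  rw [hhead, htail] at this
  rw [← this, ← hrd]
  field_simp
  ring

lemma S_pgf {Ω : Type*} [MeasurableSpace Ω] (μ : Measure Ω) [IsProbabilityMeasure μ]
    (ε s : ℝ) (n : ℕ) (hn : 1 ≤ n) (hε0 : 0 < ε) (hε1 : ε < 1) (hs0 : 0 < s) (hs1 : s < 1)
    (S : Ω → ℕ) (hS : Measurable S)
    (hSdist : ∀ k : ℕ, 1 ≤ k →
      μ {ω | S ω = k * n} = ENNReal.ofReal (ε ^ (k - 1) * (1 - ε)))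
    (hSsupp : ∀ j : ℕ, (¬ ∃ k : ℕ, 1 ≤ k ∧ j = k * n) → μ {ω | S ω = j} = 0) :
    ∫ ω, s ^ S ω ∂μ = (1 - ε) * s ^ n / (1 - ε * s ^ n) := by
  have hb : ∀ j : ℕ, |s ^ j| ≤ 1 := fun j => by
    rw [abs_of_nonneg (by positivity)]; exact pow_le_one₀ hs0.le hs1.le
  rw [integral_comp_nat μ S hS _ hb]
  set g : ℕ → ℝ := fun j => (μ {ω | S ω = j}).toReal * s ^ j with hg
  have hinj : Function.Injective (fun k : ℕ => (k + 1) * n) := by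
    intro a b hab
    simp only at hab
    have := Nat.eq_of_mul_eq_mul_right (by omega : 0 < n) hab
    omega
  have hsupp : Function.support g ⊆ Set.range (fun k : ℕ => (k + 1) * n) := by
    intro j hj
    by_contra hjr
    apply hj
    have : ¬ ∃ k : ℕ, 1 ≤ k ∧ j = k * n := by
      rintro ⟨k, hk1, hkj⟩
      refine hjr ⟨k - 1, ?_⟩
      simp only
      rw [show k - 1 + 1 = k by omega]
      exact hkj.symm
    rw [hg]; simp only
    rw [hSsupp j this]
    simp
  rw [← hinj.tsum_eq hsupp]
  have hterm : ∀ k : ℕ, g ((k + 1) * n) = ((1 - ε) * s ^ n) * (ε * s ^ n) ^ k := by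
    intro k
    rw [hg]
    simp only
    rw [hSdist (k + 1) (by omega)]
    rw [ENNReal.toReal_ofReal (mul_nonneg (pow_nonneg hε0.le _) (by linarith) : (0:ℝ) ≤ ε ^ (k + 1 - 1) * (1 - ε))]
    have : s ^ ((k + 1) * n) = (s ^ n) ^ (k + 1) := by
      rw [← pow_mul, mul_comm]
    rw [this]
    simp only [Nat.add_sub_cancel]
    rw [mul_pow, pow_succ]
    ring
  rw [tsum_congr hterm, tsum_mul_left]
  have hsn1 : s ^ n < 1 := pow_lt_one₀ hs0.le hs1 (by omega)
  have h01 : 0 ≤ ε * s ^ n := by positivity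
  have h11 : ε * s ^ n < 1 := by nlinarith [pow_pos hs0 n]
  rw [tsum_geometric_of_lt_one h01 h11]
  rw [div_eq_mul_inv]

lemma max_pgf {Ω : Type*} [MeasurableSpace Ω] (μ : Measure Ω) [IsProbabilityMeasure μ]
    (lam s : ℝ) (hl0 : 0 < lam) (hl1 : lam < 1) (hs0 : 0 < s) (hs1 : s < 1)
    (D T : Ω → ℕ) (hD : Measurable D) (hT : Measurable T) (hDT : IndepFun D T μ)
    (hTgeo : ∀ k : ℕ, 1 ≤ k →
      μ {ω | T ω = k} = ENNReal.ofReal ((1 - lam) ^ (k - 1) * lam)) :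
    ∫ ω, s ^ max (D ω) (T ω) ∂μ
      = (∫ ω, s ^ D ω ∂μ)
        - (1 - s) / (1 - (1 - lam) * s) * ∫ ω, ((1 - lam) * s) ^ D ω ∂μ := by
  set r : ℝ := (1 - lam) * s with hrdef
  have hr0 : 0 < r := by nlinarith
  have hr1 : r < 1 := by nlinarith
  have hrs : r ≤ s := by nlinarith
  have hc0 : 0 ≤ (1 - s) / (1 - r) := by
    apply div_nonneg <;> linarith
  have hc1 : (1 - s) / (1 - r) ≤ 1 := by
    rw [div_le_one (by linarith)]; linarith
  have hpairm : Measurable fun ω => (D ω, T ω) := hD.prodMk hT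
  have hfm : Measurable fun p : ℕ × ℕ => s ^ max p.1 p.2 := .of_discrete
  have hmapD : IsProbabilityMeasure (μ.map D) := Measure.isProbabilityMeasure_map hD.aemeasurable
  have hmapT : IsProbabilityMeasure (μ.map T) := Measure.isProbabilityMeasure_map hT.aemeasurable
  have hbnd : ∀ (x : ℝ), 0 < x → x < 1 → ∀ j : ℕ, |x ^ j| ≤ 1 := fun x hx0 hx1 j => by
    rw [abs_of_nonneg (by positivity)]; exact pow_le_one₀ hx0.le hx1.le
  have hmapeq : μ.map (fun ω => (D ω, T ω)) = (μ.map D).prod (μ.map T) :=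
    (indepFun_iff_map_prod_eq_prod_map_map hD.aemeasurable hT.aemeasurable).mp hDT
  have step1 : ∫ ω, s ^ max (D ω) (T ω) ∂μ
      = ∫ p : ℕ × ℕ, s ^ max p.1 p.2 ∂((μ.map D).prod (μ.map T)) := by
    rw [← hmapeq, integral_map hpairm.aemeasurable hfm.aestronglyMeasurable]
  have hint : Integrable (fun p : ℕ × ℕ => s ^ max p.1 p.2) ((μ.map D).prod (μ.map T)) :=
    integrable_bdd _ _ hfm (fun p => by
      rw [abs_of_nonneg (by positivity)]; exact pow_le_one₀ hs0.le hs1.le)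
  have step2 : ∫ p : ℕ × ℕ, s ^ max p.1 p.2 ∂((μ.map D).prod (μ.map T))
      = ∫ d, ∫ t, s ^ max d t ∂(μ.map T) ∂(μ.map D) := by
    rw [← integral_prod _ hint]
  have hinner : ∀ d : ℕ, ∫ t, s ^ max d t ∂(μ.map T)
      = s ^ d - (1 - s) / (1 - r) * r ^ d := by
    intro d
    have hgm : Measurable fun t : ℕ => s ^ max d t := .of_discrete
    rw [integral_map hT.aemeasurable hgm.aestronglyMeasurable]
    rw [integral_comp_nat μ T hT (fun t => s ^ max d t) (fun t => by
      rw [abs_of_nonneg (by positivity)]; exact pow_le_one₀ hs0.le hs1.le)]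
    exact inner_geom lam s hl0 hl1 hs0 hs1 d _
      (by rw [T_zero μ lam hl0 hl1 T hT hTgeo]; simp)
      (fun t => by
        rw [hTgeo (t + 1) (by omega)]
        simp only [Nat.add_sub_cancel]
        exact ENNReal.toReal_ofReal (mul_nonneg (pow_nonneg (by linarith) _) hl0.le))
  have step3 : ∫ d, ∫ t, s ^ max d t ∂(μ.map T) ∂(μ.map D)
      = ∫ d, (s ^ d - (1 - s) / (1 - r) * r ^ d) ∂(μ.map D) :=
    integral_congr_ae (ae_of_all _ fun d => hinner d)
  have hintS : Integrable (fun d : ℕ => s ^ d) (μ.map D) :=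
    integrable_bdd _ _ .of_discrete (hbnd s hs0 hs1)
  have hintR : Integrable (fun d : ℕ => (1 - s) / (1 - r) * r ^ d) (μ.map D) :=
    (integrable_bdd _ _ .of_discrete (hbnd r hr0 hr1)).const_mul _
  have step4 : ∫ d, (s ^ d - (1 - s) / (1 - r) * r ^ d) ∂(μ.map D)
      = (∫ d, s ^ d ∂(μ.map D)) - (1 - s) / (1 - r) * ∫ d, r ^ d ∂(μ.map D) := by
    rw [integral_sub hintS hintR, integral_const_mul]
  rw [step1, step2, step3, step4,
    integral_map hD.aemeasurable (Measurable.aestronglyMeasurable .of_discrete),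
    integral_map hD.aemeasurable (Measurable.aestronglyMeasurable .of_discrete)]
/-- Theorem 4, frame-asynchronous case: with `P = max(D', T₂-T₁) + S`, where
`D'` is the steady-state delay (with PGF `G_{D'}`), `T₂-T₁` is geometric with
parameter `λ`, `S` takes value `kn` with probability `ε^{k-1}(1-ε)`, and the
three are mutually independent, the PGF of the steady-state peak age `P` is
`G_P(s) = ((1-ε)s^n/(1-εs^n)) · (G_{D'}(s) - (1-s)G_{D'}((1-λ)s)/(1-(1-λ)s))`. -/
theorem stmt16 {Ω : Type*} [MeasurableSpace Ω] (μ : Measure Ω) [IsProbabilityMeasure μ]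
    (lam ε : ℝ) (n : ℕ) (hn : 1 ≤ n)
    (hlam0 : 0 < lam) (hlam1 : lam < 1) (hε0 : 0 < ε) (hε1 : ε < 1)
    (hstab : lam * n < 1 - ε)
    (D T S : Ω → ℕ) (hD : Measurable D) (hT : Measurable T) (hS : Measurable S)
    (hindep : iIndepFun (fun i : Fin 3 => ![D, T, S] i) μ)
    (hTgeo : ∀ k : ℕ, 1 ≤ k →
      μ {ω | T ω = k} = ENNReal.ofReal ((1 - lam) ^ (k - 1) * lam))
    (hSdist : ∀ k : ℕ, 1 ≤ k →
      μ {ω | S ω = k * n} = ENNReal.ofReal (ε ^ (k - 1) * (1 - ε)))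
    (hSsupp : ∀ j : ℕ, (¬ ∃ k : ℕ, 1 ≤ k ∧ j = k * n) → μ {ω | S ω = j} = 0)
    (hDpgf : ∀ s ∈ Set.Ioo (0 : ℝ) 1, ∫ ω, s ^ (D ω) ∂μ = GDasync lam ε n s) :
    ∀ s ∈ Set.Ioo (0 : ℝ) 1,
      ∫ ω, s ^ (max (D ω) (T ω) + S ω) ∂μ
        = (1 - ε) * s ^ n / (1 - ε * s ^ n) *
            (GDasync lam ε n s
              - (1 - s) * GDasync lam ε n ((1 - lam) * s) / (1 - (1 - lam) * s)) := by
  rintro s ⟨hs0, hs1⟩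
  have hmeas3 : ∀ i : Fin 3, Measurable (![D, T, S] i) := by
    intro i; fin_cases i <;> simpa
  have hDT : IndepFun D T μ := by
    have h := hindep.indepFun (show (0 : Fin 3) ≠ 1 by decide)
    simpa using h
  have hpair : IndepFun (fun ω => (D ω, T ω)) S μ := by
    have h := hindep.indepFun_prodMk hmeas3 0 1 2 (by decide) (by decide)
    simpa using h
  have hMS : IndepFun (fun ω => s ^ max (D ω) (T ω)) (fun ω => s ^ S ω) μ := by
    have h := hpair.comp (φ := fun p : ℕ × ℕ => s ^ max p.1 p.2)
      (ψ := fun k : ℕ => s ^ k) .of_discrete .of_discrete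
    exact h
  have hmmax : Measurable fun ω => s ^ max (D ω) (T ω) :=
    (Measurable.of_discrete (f := fun p : ℕ × ℕ => s ^ max p.1 p.2)).comp (hD.prodMk hT)
  have hmS : Measurable fun ω => s ^ S ω :=
    (Measurable.of_discrete (f := fun k : ℕ => s ^ k)).comp hS
  have hsplit : ∫ ω, s ^ (max (D ω) (T ω) + S ω) ∂μ
      = (∫ ω, s ^ max (D ω) (T ω) ∂μ) * ∫ ω, s ^ S ω ∂μ := by
    rw [← hMS.integral_mul_eq_mul_integral hmmax.aestronglyMeasurable hmS.aestronglyMeasurable]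
    congr 1 with ω
    rw [pow_add, Pi.mul_apply]
  rw [hsplit,
    S_pgf μ ε s n hn hε0 hε1 hs0 hs1 S hS hSdist hSsupp,
    max_pgf μ lam s hlam0 hlam1 hs0 hs1 D T hD hT hDT hTgeo,
    hDpgf s ⟨hs0, hs1⟩,
    hDpgf ((1 - lam) * s) ⟨by nlinarith, by nlinarith⟩]
  ring
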